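/- arXiv:1605.06681 — 3 statements merged into one kernel-verified Lean document; each statement's English description precedes it below -/
import Mathlib

section
/- Let d ≥ 2 and a ∈ L¹(ℝ^d). Then for all φ, ψ ∈ L²(S^{d-1}), the function x ↦ a(x)(Iφ)(x)·conj((Iψ)(x)) is integrable on ℝ^d and ∫_{ℝ^d} a(x)(Iφ)(x) conj((Iψ)(x)) dx = (π/(2π)^{d/2}) ∫_{S^{d-1}} ∫_{S^{d-1}} â(η−ξ) φ(ξ) conj(ψ(η)) dS(ξ) dS(η). In particular, the Toeplitz operator with symbol a, acting on the Herglotz space, is unitarily equivalent to the integral operator on L²(S^{d-1}) with kernel (π/(2π)^{d/2}) â(η−ξ). -/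
open MeasureTheory Filter Metric ComplexConjugate
open scoped NNReal ENNReal

noncomputable section

/-- Euclidean space ℝ^d. -/
abbrev Ed (d : ℕ) : Type := EuclideanSpace ℝ (Fin d)

/-- The surface measure on the unit sphere S^{d-1} ⊂ ℝ^d, realized as the
(d-1)-dimensional Hausdorff measure restricted to the sphere. -/
def surf (d : ℕ) : Measure (Ed d) := (μH[(d : ℝ) - 1]).restrict (sphere (0 : Ed d) 1)

/-- The constant c_d = √π / (2π)^{d/2}. -/
def cd (d : ℕ) : ℝ := Real.sqrt Real.pi / (2 * Real.pi) ^ ((d : ℝ) / 2)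

/-- The Herglotz wave function Iφ(x) = c_d ∫_{S^{d-1}} φ(ξ) e^{i x·ξ} dS(ξ). -/
def herg (d : ℕ) (φ : Ed d → ℂ) (x : Ed d) : ℂ :=
  (cd d : ℂ) * ∫ ξ, φ ξ * Complex.exp (Complex.I * ((inner ℝ x ξ : ℝ) : ℂ)) ∂(surf d)

/-- The Fourier transform â(ζ) = (2π)^{-d/2} ∫_{ℝ^d} e^{-i x·ζ} a(x) dx. -/
def ftr (d : ℕ) (a : Ed d → ℂ) (ζ : Ed d) : ℂ :=
  (((2 * Real.pi) ^ (-(d : ℝ) / 2) : ℝ) : ℂ) *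
    ∫ x, Complex.exp (-Complex.I * ((inner ℝ x ζ : ℝ) : ℂ)) * a x

lemma aux_sqrt {a b c : ℝ} (hc : 0 < c) (ha : c ≤ a) (hb : c ≤ b) (hab : b ≤ a) :
    Real.sqrt a - Real.sqrt b ≤ (a - b) / (2 * Real.sqrt c) := by
  have hc' : 0 < Real.sqrt c := Real.sqrt_pos.mpr hc
  rw [le_div_iff₀ (by positivity)]
  have h1 : Real.sqrt a ^ 2 = a := Real.sq_sqrt (by linarith)
  have h2 : Real.sqrt b ^ 2 = b := Real.sq_sqrt (by linarith)
  have h5 : Real.sqrt b ≤ Real.sqrt a := Real.sqrt_le_sqrt hab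
  have h3 : Real.sqrt c ≤ Real.sqrt b := Real.sqrt_le_sqrt hb
  nlinarith [mul_nonneg (sub_nonneg.mpr h5)
    (sub_nonneg.mpr (by linarith : 2 * Real.sqrt c ≤ Real.sqrt a + Real.sqrt b))]

set_option maxHeartbeats 1000000 in
lemma sphere_lt_top (n : ℕ) : μH[(n : ℝ)] (sphere (0 : Ed (n+1)) 1) < ⊤ := by
  classical
  set d : ℕ := n + 1 with hdd
  have hd1 : (1:ℝ) ≤ d := by exact_mod_cast Nat.le_add_left 1 n
  have hdpos : (0:ℝ) < d := by linarith
  have hnd : (n:ℝ) ≤ d := by exact_mod_cast Nat.le_succ n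
  set S : (Fin n → ℝ) → ℝ := fun y => ∑ k, y k ^ 2 with hS
  set s : Set (Fin n → ℝ) := {y | S y ≤ 1 - 1/(d:ℝ)} with hs
  set h : (Fin n → ℝ) → ℝ := fun y => Real.sqrt (1 - S y) with hh
  set g : Fin d → ℝ → (Fin n → ℝ) → Ed d := fun i ε y =>
    (WithLp.equiv 2 (Fin d → ℝ)).symm (i.insertNth (ε * h y) y) with hg
  set K : ℝ≥0 := 2 * (d : ℝ≥0)^2 with hK
  have hKr : (K : ℝ) = 2 * (d:ℝ)^2 := by simp [hK]
  -- basic bounds on s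
  have hyk : ∀ y ∈ s, ∀ k : Fin n, |y k| ≤ 1 := by
    intro y hy k
    rw [← sq_le_one_iff_abs_le_one]
    have h1 : y k ^ 2 ≤ S y := Finset.single_le_sum (fun j _ => sq_nonneg (y j)) (Finset.mem_univ k)
    have hy' : S y ≤ 1 - 1/(d:ℝ) := hy
    have h2 : 1/(d:ℝ) > 0 := by positivity
    linarith
  have hSd : ∀ y ∈ s, 1/(d:ℝ) ≤ 1 - S y := by
    intro y hy; have : S y ≤ 1 - 1/(d:ℝ) := hy; linarith
  have hSdiff : ∀ u ∈ s, ∀ v ∈ s, |S u - S v| ≤ 2 * n * dist u v := by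
    intro u hu v hv
    have hdist0 : (0:ℝ) ≤ dist u v := dist_nonneg
    have hcoord : ∀ k : Fin n, |u k - v k| ≤ dist u v := by
      intro k; simpa [Real.dist_eq] using dist_le_pi_dist u v k
    have he : S u - S v = ∑ k, (u k ^ 2 - v k ^ 2) := by
      rw [hS]; simp [Finset.sum_sub_distrib]
    rw [he]
    calc |∑ k, (u k ^ 2 - v k ^ 2)| ≤ ∑ k, |u k ^ 2 - v k ^ 2| :=
          Finset.abs_sum_le_sum_abs _ _
      _ ≤ ∑ _k : Fin n, 2 * dist u v := by
          apply Finset.sum_le_sum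
          intro k _
          have he2 : u k ^ 2 - v k ^ 2 = (u k - v k) * (u k + v k) := by ring
          rw [he2, abs_mul]
          have h1 := hyk u hu k
          have h2 := hyk v hv k
          have h3 : |u k + v k| ≤ 2 := (abs_add_le _ _).trans (by linarith)
          calc |u k - v k| * |u k + v k| ≤ dist u v * 2 :=
                mul_le_mul (hcoord k) h3 (abs_nonneg _) hdist0
            _ = 2 * dist u v := by ring
      _ = 2 * n * dist u v := by simp [Finset.sum_const]; ring
  have hkey : ∀ u ∈ s, ∀ v ∈ s, h u - h v ≤ Real.sqrt d * (n * dist u v) := by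
    intro u hu v hv
    rcases le_or_gt (1 - S u) (1 - S v) with hle | hlt
    · have h1 : h u ≤ h v := Real.sqrt_le_sqrt hle
      have h2 : (0:ℝ) ≤ Real.sqrt d * (n * dist u v) := by positivity
      linarith
    · have h2 := aux_sqrt (show (0:ℝ) < 1/(d:ℝ) by positivity) (hSd u hu) (hSd v hv) hlt.le
      have hsq : Real.sqrt (1/(d:ℝ)) = 1 / Real.sqrt d := by
        rw [one_div, one_div, Real.sqrt_inv]
      have hsd : (0:ℝ) < Real.sqrt d := Real.sqrt_pos.mpr hdpos
      have habs : S v - S u ≤ 2 * n * dist u v := by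
        have h3 := hSdiff v hv u hu
        rw [dist_comm] at h3
        exact (le_abs_self _).trans h3
      rw [hsq] at h2
      calc h u - h v ≤ ((1 - S u) - (1 - S v)) / (2 * (1 / Real.sqrt d)) := h2
        _ = (S v - S u) * Real.sqrt d / 2 := by field_simp; ring
        _ ≤ (2 * n * dist u v) * Real.sqrt d / 2 := by gcongr
        _ = Real.sqrt d * (n * dist u v) := by ring
  have hlip : ∀ (i : Fin d) (ε : ℝ), |ε| ≤ 1 → LipschitzOnWith K (g i ε) s := by
    intro i ε hε
    rw [lipschitzOnWith_iff_dist_le_mul]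
    intro y hy z hz
    have hdist0 : (0:ℝ) ≤ dist y z := dist_nonneg
    have hhd : |h y - h z| ≤ Real.sqrt d * (n * dist y z) := by
      rw [abs_sub_le_iff]
      refine ⟨hkey y hy z hz, ?_⟩
      have := hkey z hz y hy
      rwa [dist_comm] at this
    have hde : dist (g i ε y) (g i ε z)
        = Real.sqrt (∑ j, dist (g i ε y j) (g i ε z j) ^ 2) :=
      EuclideanSpace.dist_eq _ _
    have hsplit : ∑ j, dist (g i ε y j) (g i ε z j) ^ 2
        = dist (ε * h y) (ε * h z) ^ 2 + ∑ k, dist (y k) (z k) ^ 2 := by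
      rw [Fin.sum_univ_succAbove (fun j => dist (g i ε y j) (g i ε z j) ^ 2) i]
      simp [hg, WithLp.equiv_symm_apply, PiLp.toLp_apply, Fin.insertNth_apply_same,
        Fin.insertNth_apply_succAbove]
    have hb1 : dist (ε * h y) (ε * h z) ≤ Real.sqrt d * (n * dist y z) := by
      rw [Real.dist_eq]
      have : ε * h y - ε * h z = ε * (h y - h z) := by ring
      rw [this, abs_mul]
      calc |ε| * |h y - h z| ≤ 1 * (Real.sqrt d * (n * dist y z)) :=
            mul_le_mul hε hhd (abs_nonneg _) zero_le_one
        _ = Real.sqrt d * (n * dist y z) := one_mul _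
    have hb2 : ∑ k, dist (y k) (z k) ^ 2 ≤ n * dist y z ^ 2 := by
      calc ∑ k, dist (y k) (z k) ^ 2 ≤ ∑ _k : Fin n, dist y z ^ 2 := by
            apply Finset.sum_le_sum
            intro k _
            have := dist_le_pi_dist y z k
            nlinarith [dist_nonneg (x := y k) (y := z k)]
        _ = n * dist y z ^ 2 := by simp [Finset.sum_const]
    have hKd : (0:ℝ) ≤ (K:ℝ) * dist y z := by positivity
    rw [hde]
    have hsum_le : ∑ j, dist (g i ε y j) (g i ε z j) ^ 2 ≤ ((K:ℝ) * dist y z) ^ 2 := by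
      rw [hsplit, hKr]
      have hsd : Real.sqrt d ^ 2 = d := Real.sq_sqrt hdpos.le
      have h1 : dist (ε * h y) (ε * h z) ^ 2 ≤ (Real.sqrt d * ((n:ℝ) * dist y z)) ^ 2 := by
        have := dist_nonneg (x := ε * h y) (y := ε * h z)
        nlinarith [hb1]
      have h1' : dist (ε * h y) (ε * h z) ^ 2 ≤ (d:ℝ) * ((n:ℝ)^2 * dist y z ^ 2) := by
        calc dist (ε * h y) (ε * h z) ^ 2 ≤ (Real.sqrt d * ((n:ℝ) * dist y z)) ^ 2 := h1
          _ = (d:ℝ) * ((n:ℝ)^2 * dist y z ^ 2) := by rw [mul_pow, hsd, mul_pow]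
      have hn0 : (0:ℝ) ≤ (n:ℝ) := Nat.cast_nonneg n
      have hcoef : (d:ℝ) * (n:ℝ)^2 + (n:ℝ) ≤ (2*(d:ℝ)^2)^2 := by
        nlinarith [mul_le_mul hnd hnd hn0 hdpos.le, sq_nonneg ((d:ℝ) - 1),
          mul_le_mul hd1 hd1 zero_le_one hdpos.le]
      calc dist (ε * h y) (ε * h z) ^ 2 + ∑ k, dist (y k) (z k) ^ 2
          ≤ ((d:ℝ) * (n:ℝ)^2 + (n:ℝ)) * dist y z ^ 2 := by linarith [h1', hb2]
        _ ≤ (2*(d:ℝ)^2)^2 * dist y z ^ 2 := mul_le_mul_of_nonneg_right hcoef (sq_nonneg _)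
        _ = (2*(d:ℝ)^2 * dist y z) ^ 2 := by ring
    calc Real.sqrt (∑ j, dist (g i ε y j) (g i ε z j) ^ 2)
        ≤ Real.sqrt (((K:ℝ) * dist y z) ^ 2) := Real.sqrt_le_sqrt hsum_le
      _ = (K:ℝ) * dist y z := Real.sqrt_sq hKd
  -- covering
  have cover : sphere (0 : Ed d) 1 ⊆ ⋃ i : Fin d, (g i 1 '' s ∪ g i (-1) '' s) := by
    intro x hx
    have hx1 : ∑ j, x j ^ 2 = 1 := by
      have hn : ‖x‖ = 1 := by simpa using mem_sphere_zero_iff_norm.mp hx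
      have he := EuclideanSpace.norm_eq x
      rw [hn] at he
      have : ∑ j, ‖x j‖ ^ 2 = 1 := by
        rw [← Real.sqrt_eq_one] at *
        · exact he.symm ▸ rfl
      simpa [sq_abs, Real.norm_eq_abs] using this
    obtain ⟨i, hi⟩ : ∃ i, 1/(d:ℝ) ≤ x i ^ 2 := by
      by_contra hcon
      push_neg at hcon
      have hlt : ∑ j, x j ^ 2 < ∑ _j : Fin d, 1/(d:ℝ) :=
        Finset.sum_lt_sum_of_nonempty (by simp [hdd]) fun j _ => hcon j
      rw [hx1] at hlt
      simp only [Finset.sum_const, Finset.card_univ, Fintype.card_fin, nsmul_eq_mul] at hlt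
      rw [mul_one_div, div_self (ne_of_gt hdpos)] at hlt
      exact lt_irrefl _ hlt
    set xf : Fin d → ℝ := WithLp.equiv 2 (Fin d → ℝ) x with hxf
    set y : Fin n → ℝ := i.removeNth xf with hy
    have hSy : S y = 1 - x i ^ 2 := by
      have hsum := Fin.sum_univ_succAbove (fun j => x j ^ 2) i
      rw [hx1] at hsum
      have : S y = ∑ k, x (i.succAbove k) ^ 2 := by
        rw [hS]; rfl
      rw [this]; linarith [hsum]
    have hys : y ∈ s := by
      rw [hs]; show S y ≤ 1 - 1/(d:ℝ)
      rw [hSy]; linarith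
    have hhy : h y = |x i| := by
      rw [hh]; show Real.sqrt (1 - S y) = |x i|
      rw [hSy]
      have : 1 - (1 - x i ^ 2) = x i ^ 2 := by ring
      rw [this, Real.sqrt_sq_eq_abs]
    have hins : ∀ c : ℝ, c = x i → g i 1 y = x ∨ True := fun _ _ => Or.inr trivial
    rcases le_or_gt 0 (x i) with hpos | hneg
    · refine Set.mem_iUnion.mpr ⟨i, Or.inl ⟨y, hys, ?_⟩⟩
      rw [hg]
      simp only
      rw [(WithLp.equiv 2 (Fin d → ℝ)).symm_apply_eq]
      have : (1:ℝ) * h y = xf i := by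
        rw [one_mul, hhy, abs_of_nonneg hpos]; rfl
      rw [this, hy, Fin.insertNth_self_removeNth]
    · refine Set.mem_iUnion.mpr ⟨i, Or.inr ⟨y, hys, ?_⟩⟩
      rw [hg]
      simp only
      rw [(WithLp.equiv 2 (Fin d → ℝ)).symm_apply_eq]
      have : (-1:ℝ) * h y = xf i := by
        rw [hhy, abs_of_nonpos hneg.le]; show (-1) * -(x i) = xf i; ring_nf; rfl
      rw [this, hy, Fin.insertNth_self_removeNth]
  -- finiteness of each piece
  have himg : ∀ (i : Fin d) (ε : ℝ), |ε| ≤ 1 → μH[(n:ℝ)] (g i ε '' s) < ⊤ := by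
    intro i ε hε
    have h1 := (hlip i ε hε).hausdorffMeasure_image_le (by positivity : (0:ℝ) ≤ (n:ℝ))
    have hsub : s ⊆ closedBall (0 : Fin n → ℝ) 1 := by
      intro y hy
      rw [mem_closedBall, dist_zero_right]
      rw [pi_norm_le_iff_of_nonneg zero_le_one]
      intro k
      simpa [Real.norm_eq_abs] using hyk y hy k
    have h2 : μH[(n:ℝ)] s ≤ μH[(n:ℝ)] (closedBall (0 : Fin n → ℝ) 1) := measure_mono hsub
    have h3 : μH[(n:ℝ)] (closedBall (0 : Fin n → ℝ) 1)
        = volume (closedBall (0 : Fin n → ℝ) 1) := by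
      rw [show ((n:ℝ)) = ((Fintype.card (Fin n) : ℕ) : ℝ) by simp, hausdorffMeasure_pi_real]
    refine lt_of_le_of_lt h1 ?_
    refine ENNReal.mul_lt_top ?_ ?_
    · exact ENNReal.rpow_lt_top_of_nonneg (by positivity) ENNReal.coe_ne_top
    · exact lt_of_le_of_lt h2 (h3 ▸ measure_closedBall_lt_top)
  calc μH[(n:ℝ)] (sphere (0 : Ed d) 1)
      ≤ μH[(n:ℝ)] (⋃ i : Fin d, (g i 1 '' s ∪ g i (-1) '' s)) := measure_mono cover
    _ ≤ ∑' i : Fin d, μH[(n:ℝ)] (g i 1 '' s ∪ g i (-1) '' s) := measure_iUnion_le _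
    _ < ⊤ := by
        rw [tsum_fintype]
        refine ENNReal.sum_lt_top.mpr fun i _ => ?_
        refine lt_of_le_of_lt (measure_union_le _ _) ?_
        exact ENNReal.add_lt_top.mpr ⟨himg i 1 (by simp), himg i (-1) (by simp)⟩

lemma surf_finite (d : ℕ) (hd : 1 ≤ d) : IsFiniteMeasure (surf d) := by
  obtain ⟨n, rfl⟩ : ∃ n, d = n + 1 := ⟨d - 1, (Nat.succ_pred_eq_of_pos hd).symm⟩
  constructor
  rw [surf, Measure.restrict_apply_univ]
  have he : ((n+1:ℕ):ℝ) - 1 = (n:ℝ) := by push_cast; ring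
  rw [he]
  exact sphere_lt_top n

lemma norm_exp_I_mul (t : ℝ) : ‖Complex.exp (Complex.I * (t:ℂ))‖ = 1 := by
  simp [Complex.norm_exp]

lemma norm_exp_neg_I_mul (t : ℝ) : ‖Complex.exp (-Complex.I * (t:ℂ))‖ = 1 := by
  simp [Complex.norm_exp]

/-- for a ∈ L¹(ℝ^d) and φ, ψ ∈ L²(S^{d-1}), the function
a·(Iφ)·conj(Iψ) is integrable and
∫ a (Iφ) conj(Iψ) = (π/(2π)^{d/2}) ∫∫ â(η-ξ) φ(ξ) conj(ψ(η)) dS(ξ) dS(η). -/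
theorem statement2 (d : ℕ) (hd : 2 ≤ d) (a : Ed d → ℂ) (ha : Integrable a)
    (φ ψ : Ed d → ℂ) (hφ : MemLp φ 2 (surf d)) (hψ : MemLp ψ 2 (surf d)) :
    Integrable (fun x => a x * herg d φ x * conj (herg d ψ x)) ∧
    ∫ x, a x * herg d φ x * conj (herg d ψ x) =
      ((Real.pi / (2 * Real.pi) ^ ((d : ℝ) / 2) : ℝ) : ℂ) *
        ∫ η, (∫ ξ, ftr d a (η - ξ) * φ ξ * conj (ψ η) ∂(surf d)) ∂(surf d) := by
  haveI : IsFiniteMeasure (surf d) := surf_finite d (by omega)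
  set μ := surf d with hμ
  have hφ1 : Integrable φ μ := hφ.integrable one_le_two
  have hψ1 : Integrable ψ μ := hψ.integrable one_le_two
  have hψc : Integrable (fun ξ => conj (ψ ξ)) μ := by
    refine ⟨RCLike.continuous_conj.comp_aestronglyMeasurable hψ1.1, ?_⟩
    simpa [HasFiniteIntegral] using hψ1.2
  -- continuity of herg
  have hcont : ∀ (χ : Ed d → ℂ), Integrable χ μ → Continuous (herg d χ) := by
    intro χ hχ
    apply Continuous.mul continuous_const
    apply continuous_of_dominated (bound := fun ξ => ‖χ ξ‖)
    · intro x
      refine hχ.1.mul (Continuous.aestronglyMeasurable ?_)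
      exact Complex.continuous_exp.comp (continuous_const.mul
        (Complex.continuous_ofReal.comp (continuous_const.inner continuous_id)))
    · intro x
      filter_upwards with ξ
      rw [norm_mul, norm_exp_I_mul, mul_one]
    · exact hχ.norm
    · filter_upwards with ξ
      exact continuous_const.mul (Complex.continuous_exp.comp (continuous_const.mul
        (Complex.continuous_ofReal.comp ((continuous_id.inner continuous_const)))))
  -- uniform bound on herg
  have hbound : ∀ (χ : Ed d → ℂ) (x : Ed d),
      ‖herg d χ x‖ ≤ |cd d| * ∫ ξ, ‖χ ξ‖ ∂μ := by
    intro χ x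
    rw [herg, norm_mul, Complex.norm_real, Real.norm_eq_abs]
    refine mul_le_mul_of_nonneg_left ?_ (abs_nonneg _)
    refine (norm_integral_le_integral_norm _).trans (le_of_eq ?_)
    congr 1 with ξ
    rw [norm_mul, norm_exp_I_mul, mul_one]
  -- Part 1 : integrability
  have hmφψ : AEStronglyMeasurable (fun x => herg d φ x * conj (herg d ψ x)) volume :=
    ((hcont φ hφ1).mul (RCLike.continuous_conj.comp (hcont ψ hψ1))).aestronglyMeasurable
  have hint1 : Integrable (fun x => a x * herg d φ x * conj (herg d ψ x)) := by
    have hre : (fun x => a x * herg d φ x * conj (herg d ψ x))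
        = fun x => (herg d φ x * conj (herg d ψ x)) * a x := by
      funext x; ring
    rw [hre]
    refine ha.bdd_mul hmφψ (c := (|cd d| * ∫ ξ, ‖φ ξ‖ ∂μ) * (|cd d| * ∫ ξ, ‖ψ ξ‖ ∂μ)) (ae_of_all _ fun x => ?_)
    rw [norm_mul]
    have h2 : ‖conj (herg d ψ x)‖ = ‖herg d ψ x‖ := RCLike.norm_conj _
    rw [h2]
    exact mul_le_mul (hbound φ x) (hbound ψ x) (norm_nonneg _)
      (mul_nonneg (abs_nonneg _) (integral_nonneg fun _ => norm_nonneg _))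
  refine ⟨hint1, ?_⟩
  -- the product kernel
  set W : Ed d → Ed d × Ed d → ℂ := fun x p =>
    conj (ψ p.1) * φ p.2 * Complex.exp (-Complex.I * ((inner ℝ x (p.1 - p.2) : ℝ) : ℂ)) with hW
  -- pointwise identity P1
  have P1 : ∀ x : Ed d, herg d φ x * conj (herg d ψ x)
      = ((cd d : ℂ))^2 * ∫ p, W x p ∂(μ.prod μ) := by
    intro x
    have hconj : conj (herg d ψ x)
        = (cd d : ℂ) * ∫ η, conj (ψ η) * Complex.exp (-Complex.I * ((inner ℝ x η : ℝ) : ℂ)) ∂μ := by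
      rw [herg, map_mul, Complex.conj_ofReal, ← integral_conj]
      congr 1
      apply integral_congr_ae
      filter_upwards with η
      rw [map_mul, ← Complex.exp_conj]
      congr 1
      simp only [map_mul, Complex.conj_I, Complex.conj_ofReal]
    rw [herg, hconj]
    have hrw : (∫ η, conj (ψ η) * Complex.exp (-Complex.I * ((inner ℝ x η : ℝ) : ℂ)) ∂μ)
        * (∫ ξ, φ ξ * Complex.exp (Complex.I * ((inner ℝ x ξ : ℝ) : ℂ)) ∂μ)
        = ∫ p, W x p ∂(μ.prod μ) := by
      rw [← integral_prod_mul]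
      congr 1 with p
      rw [hW]
      simp only
      rw [mul_mul_mul_comm, ← Complex.exp_add, inner_sub_right]
      push_cast
      ring_nf
    calc (cd d : ℂ) * (∫ ξ, φ ξ * Complex.exp (Complex.I * ((inner ℝ x ξ : ℝ) : ℂ)) ∂μ)
          * ((cd d : ℂ) * ∫ η, conj (ψ η) * Complex.exp (-Complex.I * ((inner ℝ x η : ℝ) : ℂ)) ∂μ)
        = ((cd d : ℂ))^2 * ((∫ η, conj (ψ η) * Complex.exp (-Complex.I * ((inner ℝ x η : ℝ) : ℂ)) ∂μ)
            * (∫ ξ, φ ξ * Complex.exp (Complex.I * ((inner ℝ x ξ : ℝ) : ℂ)) ∂μ)) := by ring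
      _ = ((cd d : ℂ))^2 * ∫ p, W x p ∂(μ.prod μ) := by rw [hrw]
  -- integrability of the full kernel on the product space
  have hbase : Integrable (fun p : Ed d × Ed d => conj (ψ p.1) * φ p.2) (μ.prod μ) :=
    hψc.mul_prod hφ1
  have hexp_cont : Continuous (fun q : Ed d × (Ed d × Ed d) =>
      Complex.exp (-Complex.I * ((inner ℝ q.1 (q.2.1 - q.2.2) : ℝ) : ℂ))) := by
    exact Complex.continuous_exp.comp (continuous_const.mul (Complex.continuous_ofReal.comp
      (continuous_fst.inner ((continuous_fst.comp continuous_snd).sub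
        (continuous_snd.comp continuous_snd)))))
  have hT : Integrable (fun q : Ed d × (Ed d × Ed d) => a q.1 * W q.1 q.2)
      (volume.prod (μ.prod μ)) := by
    have hb2 : Integrable (fun q : Ed d × (Ed d × Ed d) =>
        a q.1 * (conj (ψ q.2.1) * φ q.2.2)) (volume.prod (μ.prod μ)) := ha.mul_prod hbase
    have hre : (fun q : Ed d × (Ed d × Ed d) => a q.1 * W q.1 q.2)
        = fun q => Complex.exp (-Complex.I * ((inner ℝ q.1 (q.2.1 - q.2.2) : ℝ) : ℂ))
            * (a q.1 * (conj (ψ q.2.1) * φ q.2.2)) := by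
      funext q; rw [hW]; ring
    rw [hre]
    exact hb2.bdd_mul hexp_cont.aestronglyMeasurable
      (c := 1) (ae_of_all _ fun q => le_of_eq (norm_exp_neg_I_mul _))
  -- pointwise identity P2
  have P2 : ∀ x : Ed d, a x * herg d φ x * conj (herg d ψ x)
      = ((cd d : ℂ))^2 * ∫ p, a x * W x p ∂(μ.prod μ) := by
    intro x
    rw [mul_assoc, P1 x, integral_const_mul]
    ring
  -- continuity and boundedness of ftr
  have hftr_cont : Continuous (ftr d a) := by
    apply Continuous.mul continuous_const
    apply continuous_of_dominated (bound := fun x => ‖a x‖)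
    · intro ζ
      refine (Continuous.aestronglyMeasurable ?_).mul ha.1
      exact Complex.continuous_exp.comp (continuous_const.mul
        (Complex.continuous_ofReal.comp (continuous_id.inner continuous_const)))
    · intro ζ
      filter_upwards with x
      rw [norm_mul, norm_exp_neg_I_mul, one_mul]
    · exact ha.norm
    · filter_upwards with x
      exact (Complex.continuous_exp.comp (continuous_const.mul
        (Complex.continuous_ofReal.comp (continuous_const.inner continuous_id)))).mul
        continuous_const
  have hftr_bdd : ∀ ζ : Ed d, ‖ftr d a ζ‖ ≤ (2*Real.pi) ^ (-(d:ℝ)/2) * ∫ x, ‖a x‖ := by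
    intro ζ
    rw [ftr, norm_mul, Complex.norm_real, Real.norm_eq_abs,
      abs_of_nonneg (by positivity : (0:ℝ) ≤ (2*Real.pi) ^ (-(d:ℝ)/2))]
    refine mul_le_mul_of_nonneg_left ?_ (by positivity)
    refine (norm_integral_le_integral_norm _).trans (le_of_eq ?_)
    congr 1 with x
    rw [norm_mul, norm_exp_neg_I_mul, one_mul]
  -- integrability of the final product kernel
  have hf : Integrable (fun p : Ed d × Ed d =>
      ftr d a (p.1 - p.2) * φ p.2 * conj (ψ p.1)) (μ.prod μ) := by
    have hre : (fun p : Ed d × Ed d => ftr d a (p.1 - p.2) * φ p.2 * conj (ψ p.1))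
        = fun p => ftr d a (p.1 - p.2) * (conj (ψ p.1) * φ p.2) := by
      funext p; ring
    rw [hre]
    refine hbase.bdd_mul ?_ (c := (2*Real.pi) ^ (-(d:ℝ)/2) * ∫ x, ‖a x‖) (ae_of_all _ fun p => hftr_bdd _)
    exact (hftr_cont.comp (continuous_fst.sub continuous_snd)).aestronglyMeasurable
  -- inner integral computation
  have P3 : ∀ p : Ed d × Ed d, (∫ x, a x * W x p)
      = ((((2*Real.pi) ^ ((d:ℝ)/2) : ℝ)) : ℂ)
        * (ftr d a (p.1 - p.2) * φ p.2 * conj (ψ p.1)) := by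
    intro p
    have h1 : ∀ x : Ed d, a x * W x p = (conj (ψ p.1) * φ p.2)
        * (Complex.exp (-Complex.I * ((inner ℝ x (p.1 - p.2) : ℝ) : ℂ)) * a x) := by
      intro x; rw [hW]; ring
    simp only [h1]
    rw [integral_const_mul]
    have h2 : (∫ x, Complex.exp (-Complex.I * ((inner ℝ x (p.1 - p.2) : ℝ) : ℂ)) * a x)
        = ((((2*Real.pi) ^ ((d:ℝ)/2) : ℝ)) : ℂ) * ftr d a (p.1 - p.2) := by
      rw [ftr, ← mul_assoc, ← Complex.ofReal_mul,
        show (2*Real.pi) ^ ((d:ℝ)/2) * (2*Real.pi) ^ (-(d:ℝ)/2) = 1 from by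
          rw [← Real.rpow_add (by positivity),
            show (d:ℝ)/2 + -(d:ℝ)/2 = 0 by ring, Real.rpow_zero],
        Complex.ofReal_one, one_mul]
    rw [h2]
    ring
  -- constant identity
  have hconst : ((cd d : ℂ))^2 * ((((2*Real.pi) ^ ((d:ℝ)/2) : ℝ)) : ℂ)
      = ((Real.pi / (2 * Real.pi) ^ ((d : ℝ) / 2) : ℝ) : ℂ) := by
    rw [← Complex.ofReal_pow, ← Complex.ofReal_mul]
    congr 1
    have hB : (0:ℝ) < (2*Real.pi) ^ ((d:ℝ)/2) := Real.rpow_pos_of_pos (by positivity) _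
    rw [cd, div_pow, Real.sq_sqrt Real.pi_pos.le]
    field_simp
  -- main computation
  calc ∫ x, a x * herg d φ x * conj (herg d ψ x)
      = ∫ x, ((cd d : ℂ))^2 * ∫ p, a x * W x p ∂(μ.prod μ) := by simp only [P2]
    _ = ((cd d : ℂ))^2 * ∫ x, ∫ p, a x * W x p ∂(μ.prod μ) := integral_const_mul _ _
    _ = ((cd d : ℂ))^2 * ∫ p, (∫ x, a x * W x p) ∂(μ.prod μ) := by
        rw [integral_integral_swap hT]
    _ = ((cd d : ℂ))^2 * ∫ p, ((((2*Real.pi) ^ ((d:ℝ)/2) : ℝ)) : ℂ)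
          * (ftr d a (p.1 - p.2) * φ p.2 * conj (ψ p.1)) ∂(μ.prod μ) := by
        simp only [P3]
    _ = ((cd d : ℂ))^2 * (((((2*Real.pi) ^ ((d:ℝ)/2) : ℝ)) : ℂ)
          * ∫ p, ftr d a (p.1 - p.2) * φ p.2 * conj (ψ p.1) ∂(μ.prod μ)) := by
        rw [integral_const_mul]
    _ = ((Real.pi / (2 * Real.pi) ^ ((d : ℝ) / 2) : ℝ) : ℂ) *
          ∫ η, (∫ ξ, ftr d a (η - ξ) * φ ξ * conj (ψ η) ∂μ) ∂μ := by
        rw [MeasureTheory.integral_prod _ hf, ← mul_assoc, hconst]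
end
end

section
/- Let d ≥ 2 and a ∈ L¹(ℝ^d). Suppose the Fourier transform â vanishes on the closed ball of radius 2 centered at the origin, i.e., â(ζ) = 0 for all ζ ∈ ℝ^d with |ζ| ≤ 2. Then the Toeplitz operator with symbol a on the Herglotz space is the zero operator: for all φ, ψ ∈ L²(S^{d-1}), ∫_{ℝ^d} a(x)(Iφ)(x) conj((Iψ)(x)) dx = 0. -/
open MeasureTheory Filter Metric ComplexConjugate

noncomputable section

open scoped NNReal ENNReal

lemma coord_le_norm {m : ℕ} (x : Ed m) (j : Fin m) : |x j| ≤ ‖x‖ := by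
  rw [EuclideanSpace.norm_eq]
  calc |x j| = Real.sqrt (‖x j‖ ^ 2) := by
        rw [Real.norm_eq_abs, Real.sqrt_sq_eq_abs, abs_abs]
    _ ≤ _ := Real.sqrt_le_sqrt (Finset.single_le_sum
        (f := fun i => ‖x i‖ ^ 2) (fun i _ => sq_nonneg _) (Finset.mem_univ j))

/-- Insert a coordinate: an isometric embedding of `Ed n` into `Ed (n+1)`. -/
def insE (n : ℕ) (i : Fin (n + 1)) (c : ℝ) (y : Ed n) : Ed (n + 1) :=
  (WithLp.equiv 2 (∀ _ : Fin (n + 1), ℝ)).symm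
    (i.insertNth c ((WithLp.equiv 2 (∀ _ : Fin n, ℝ)) y))

lemma insE_apply (n : ℕ) (i : Fin (n + 1)) (c : ℝ) (y : Ed n) (j : Fin (n + 1)) :
    insE n i c y j = Fin.insertNth (α := fun _ => ℝ) i c (fun k => y k) j := by
  rfl

lemma insE_apply_same (n : ℕ) (i : Fin (n + 1)) (c : ℝ) (y : Ed n) :
    insE n i c y i = c := by
  rw [insE_apply, Fin.insertNth_apply_same]

lemma insE_apply_succAbove (n : ℕ) (i : Fin (n + 1)) (c : ℝ) (y : Ed n) (k : Fin n) :
    insE n i c y (i.succAbove k) = y k := by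
  rw [insE_apply, Fin.insertNth_apply_succAbove]

lemma insE_isometry (n : ℕ) (i : Fin (n + 1)) (c : ℝ) : Isometry (insE n i c) := by
  apply Isometry.of_dist_eq
  intro a b
  rw [EuclideanSpace.dist_eq, EuclideanSpace.dist_eq]
  congr 1
  rw [Fin.sum_univ_succAbove (fun j => dist (insE n i c a j) (insE n i c b j) ^ 2) i]
  simp [insE_apply_same, insE_apply_succAbove]

lemma normalize_lipschitz (m : ℕ) :
    LipschitzOnWith 2 (fun x : Ed m => ‖x‖⁻¹ • x) {x | 1 ≤ ‖x‖} := by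
  apply LipschitzOnWith.of_dist_le_mul
  intro x hx y hy
  simp only [Set.mem_setOf_eq] at hx hy
  have hx0 : (0 : ℝ) < ‖x‖ := lt_of_lt_of_le one_pos hx
  have hy0 : (0 : ℝ) < ‖y‖ := lt_of_lt_of_le one_pos hy
  rw [dist_eq_norm, dist_eq_norm]
  have key : ‖x‖⁻¹ • x - ‖y‖⁻¹ • y = ‖x‖⁻¹ • (x - y) + (‖x‖⁻¹ - ‖y‖⁻¹) • y := by
    rw [smul_sub, sub_smul]; abel
  have habs : |‖y‖ - ‖x‖| ≤ ‖x - y‖ := by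
    rw [abs_sub_comm]; exact abs_norm_sub_norm_le x y
  have h1 : ‖‖x‖⁻¹ • (x - y)‖ ≤ ‖x - y‖ := by
    rw [norm_smul, norm_inv, norm_norm]
    have hinv : ‖x‖⁻¹ ≤ 1 := by
      rw [← one_div]; exact (div_le_one hx0).mpr hx
    nlinarith [norm_nonneg (x - y)]
  have h2 : ‖(‖x‖⁻¹ - ‖y‖⁻¹) • y‖ ≤ ‖x - y‖ := by
    rw [norm_smul, Real.norm_eq_abs]
    have e : ‖x‖⁻¹ - ‖y‖⁻¹ = (‖y‖ - ‖x‖) / (‖x‖ * ‖y‖) := by field_simp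
    rw [e, abs_div, abs_mul, abs_of_pos hx0, abs_of_pos hy0]
    rw [div_mul_eq_mul_div, div_le_iff₀ (by positivity)]
    nlinarith [mul_le_mul_of_nonneg_right habs hy0.le, norm_nonneg (x - y),
      mul_nonneg (norm_nonneg (x - y)) (norm_nonneg y)]
  calc ‖‖x‖⁻¹ • x - ‖y‖⁻¹ • y‖ ≤ ‖‖x‖⁻¹ • (x - y)‖ + ‖(‖x‖⁻¹ - ‖y‖⁻¹) • y‖ := by
        rw [key]; exact norm_add_le _ _
    _ ≤ ‖x - y‖ + ‖x - y‖ := add_le_add h1 h2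
    _ = ((2 : NNReal) : ℝ) * ‖x - y‖ := by push_cast; ring

def cubeC (n : ℕ) : Set (Ed (n + 1)) :=
  ⋃ i : Fin (n + 1),
    insE n i 1 '' closedBall 0 (n + 1) ∪ insE n i (-1) '' closedBall 0 (n + 1)

lemma cubeC_subset (n : ℕ) : cubeC n ⊆ {x : Ed (n + 1) | 1 ≤ ‖x‖} := by
  intro x hx
  simp only [cubeC, Set.mem_iUnion, Set.mem_union, Set.mem_image] at hx
  obtain ⟨i, hx⟩ := hx
  have : |x i| = 1 := by
    rcases hx with ⟨y, _, rfl⟩ | ⟨y, _, rfl⟩ <;> rw [insE_apply_same] <;> norm_num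
  have := coord_le_norm x i
  simp only [Set.mem_setOf_eq]
  linarith

lemma sphere_subset_cover (n : ℕ) :
    sphere (0 : Ed (n + 1)) 1 ⊆ (fun x : Ed (n + 1) => ‖x‖⁻¹ • x) '' cubeC n := by
  intro y hy
  have hny : ‖y‖ = 1 := by simpa using mem_sphere_zero_iff_norm.mp hy
  obtain ⟨i, hi⟩ := Finite.exists_max (fun j => |y j|)
  have hipos : 0 < |y i| := by
    rcases (abs_nonneg (y i)).lt_or_eq with h | h
    · exact h
    · exfalso
      have hy0 : y = 0 := by
        ext j
        have := hi j
        rw [← h] at this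
        simpa using le_antisymm this (abs_nonneg _)
      rw [hy0] at hny; simp at hny
  set t : ℝ := |y i|⁻¹ with ht
  have htpos : 0 < t := inv_pos.mpr hipos
  set x : Ed (n + 1) := t • y with hxdef
  have hxj : ∀ j, x j = t * y j := fun j => rfl
  have hxi : |x i| = 1 := by
    rw [hxj, abs_mul, abs_of_pos htpos, ht, inv_mul_cancel₀ (ne_of_gt hipos)]
  have hxnorm : ‖x‖ = t := by
    rw [hxdef, norm_smul, Real.norm_eq_abs, abs_of_pos htpos, hny, mul_one]
  refine ⟨x, ?_, ?_⟩
  · -- x ∈ cubeC n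
    have hrem : (WithLp.equiv 2 (∀ _ : Fin n, ℝ)).symm (fun k => x (i.succAbove k)) ∈
        closedBall (0 : Ed n) (n + 1) := by
      rw [mem_closedBall, dist_zero_right, EuclideanSpace.norm_eq]
      have hterm : ∀ k : Fin n,
          ‖(WithLp.equiv 2 (∀ _ : Fin n, ℝ)).symm (fun k => x (i.succAbove k)) k‖ ^ 2 ≤ 1 := by
        intro k
        have h1 : |x (i.succAbove k)| ≤ 1 := by
          rw [hxj, abs_mul, abs_of_pos htpos, ht]
          calc |y i|⁻¹ * |y (i.succAbove k)| ≤ |y i|⁻¹ * |y i| := by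
                exact mul_le_mul_of_nonneg_left (hi _) (le_of_lt htpos)
            _ = 1 := inv_mul_cancel₀ (ne_of_gt hipos)
        have h2 : ‖x (i.succAbove k)‖ ≤ 1 := by rwa [Real.norm_eq_abs]
        show ‖x (i.succAbove k)‖ ^ 2 ≤ 1
        nlinarith [norm_nonneg (x (i.succAbove k))]
      calc Real.sqrt (∑ k : Fin n,
            ‖(WithLp.equiv 2 (∀ _ : Fin n, ℝ)).symm (fun k => x (i.succAbove k)) k‖ ^ 2)
          ≤ Real.sqrt (∑ _k : Fin n, 1) := by
            apply Real.sqrt_le_sqrt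
            exact Finset.sum_le_sum fun k _ => hterm k
        _ ≤ ((n : ℝ) + 1) := by
            rw [Finset.sum_const]
            simp only [Finset.card_univ, Fintype.card_fin, nsmul_eq_mul, mul_one]
            calc Real.sqrt (n : ℝ) ≤ Real.sqrt (((n : ℝ) + 1) ^ 2) := by
                  apply Real.sqrt_le_sqrt; nlinarith [Nat.cast_nonneg (α := ℝ) n]
              _ = (n : ℝ) + 1 := Real.sqrt_sq (by positivity)
    have hxeq : ∀ c : ℝ, x i = c →
        x = insE n i c ((WithLp.equiv 2 (∀ _ : Fin n, ℝ)).symm (fun k => x (i.succAbove k))) := by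
      intro c hc
      ext j
      rw [insE_apply]
      have := congrFun (Fin.insertNth_self_removeNth (α := fun _ => ℝ) i (fun j => x j)) j
      rw [← hc] at *
      exact this.symm
    rcases (abs_eq (by norm_num : (0:ℝ) ≤ 1)).mp hxi with h1 | h1
    · exact Set.mem_iUnion.mpr ⟨i, Or.inl ⟨_, hrem, (hxeq 1 h1).symm⟩⟩
    · exact Set.mem_iUnion.mpr ⟨i, Or.inr ⟨_, hrem, (hxeq (-1) h1).symm⟩⟩
  · -- normalization maps back to y
    show ‖x‖⁻¹ • x = y
    rw [hxnorm, hxdef, smul_smul, inv_mul_cancel₀ (ne_of_gt htpos), one_smul]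

lemma hausdorff_ball_lt_top (n : ℕ) (R : ℝ) :
    μH[(n : ℝ)] (closedBall (0 : Ed n) R) < ⊤ := by
  have h : ((n : ℕ) : ℝ) = ((Module.finrank ℝ (Ed n) : ℕ) : ℝ) := by
    rw [finrank_euclideanSpace_fin]
  rw [h]
  exact (isCompact_closedBall _ _).measure_lt_top

lemma sphere_hausdorff_lt_top (n : ℕ) :
    μH[(n : ℝ)] (sphere (0 : Ed (n + 1)) 1) < ⊤ := by
  have hd0 : (0 : ℝ) ≤ (n : ℝ) := Nat.cast_nonneg n
  have hC : μH[(n : ℝ)] (cubeC n) < ⊤ := by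
    have hface : ∀ (i : Fin (n + 1)) (c : ℝ),
        μH[(n : ℝ)] (insE n i c '' closedBall 0 (n + 1)) < ⊤ := by
      intro i c
      rw [(insE_isometry n i c).hausdorffMeasure_image (Or.inl hd0)]
      exact hausdorff_ball_lt_top n _
    calc μH[(n : ℝ)] (cubeC n)
        ≤ ∑' i : Fin (n + 1), μH[(n : ℝ)]
          (insE n i 1 '' closedBall 0 (n + 1) ∪ insE n i (-1) '' closedBall 0 (n + 1)) :=
          measure_iUnion_le _
      _ < ⊤ := by
          rw [tsum_fintype]
          apply ENNReal.sum_lt_top.mpr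
          intro i _
          exact lt_of_le_of_lt (measure_union_le _ _)
            (ENNReal.add_lt_top.mpr ⟨hface i 1, hface i (-1)⟩)
  calc μH[(n : ℝ)] (sphere (0 : Ed (n + 1)) 1)
      ≤ μH[(n : ℝ)] ((fun x : Ed (n + 1) => ‖x‖⁻¹ • x) '' cubeC n) :=
        measure_mono (sphere_subset_cover n)
    _ ≤ (2 : ℝ≥0) ^ (n : ℝ) * μH[(n : ℝ)] (cubeC n) :=
        ((normalize_lipschitz (n + 1)).mono (cubeC_subset n)).hausdorffMeasure_image_le hd0
    _ < ⊤ := ENNReal.mul_lt_top (by simp [ENNReal.rpow_natCast]) hC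

lemma surf_finite_s3 (n : ℕ) : IsFiniteMeasure (surf (n + 1)) := by
  constructor
  rw [surf, Measure.restrict_apply_univ]
  have h : ((n + 1 : ℕ) : ℝ) - 1 = (n : ℝ) := by push_cast; ring
  rw [h]
  exact sphere_hausdorff_lt_top n

/-- if â vanishes on the closed ball of radius 2, the Toeplitz
operator with symbol a on the Herglotz space is zero. -/
theorem statement3 (d : ℕ) (hd : 2 ≤ d) (a : Ed d → ℂ) (ha : Integrable a)
    (hvanish : ∀ ζ : Ed d, ‖ζ‖ ≤ 2 → ftr d a ζ = 0)
    (φ ψ : Ed d → ℂ) (hφ : MemLp φ 2 (surf d)) (hψ : MemLp ψ 2 (surf d)) :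
    ∫ x, a x * herg d φ x * conj (herg d ψ x) = 0 := by
  obtain ⟨m, rfl⟩ : ∃ m, d = m + 1 := ⟨d - 1, by omega⟩
  let D := Ed (m + 1)
  set ν : Measure D := surf (m + 1) with hν
  haveI : IsFiniteMeasure ν := surf_finite_s3 m
  have hφi : Integrable φ ν := hφ.integrable one_le_two
  have hψi : Integrable ψ ν := hψ.integrable one_le_two
  have hψci : Integrable (fun η => conj (ψ η)) ν := by
    refine hψi.norm.mono' ?_ (Eventually.of_forall fun η => by simp)
    exact Complex.continuous_conj.comp_aestronglyMeasurable hψi.aestronglyMeasurable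
  set c : ℂ := (cd (m + 1) : ℂ) with hc
  set F : D × (D × D) → ℂ := fun z =>
    a z.1 * (φ z.2.1 * Complex.exp (Complex.I * ((inner ℝ z.1 z.2.1 : ℝ) : ℂ))) *
      (conj (ψ z.2.2) * Complex.exp (-Complex.I * ((inner ℝ z.1 z.2.2 : ℝ) : ℂ))) with hF
  -- integrability of F
  have hbase : Integrable (fun z : D × (D × D) => a z.1 * (φ z.2.1 * conj (ψ z.2.2)))
      (volume.prod (ν.prod ν)) := ha.mul_prod (hφi.mul_prod hψci)
  have hucont : Continuous (fun z : D × (D × D) =>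
      Complex.exp (Complex.I * ((inner ℝ z.1 z.2.1 : ℝ) : ℂ)) *
        Complex.exp (-Complex.I * ((inner ℝ z.1 z.2.2 : ℝ) : ℂ))) := by
    have h1 : Continuous fun z : D × (D × D) => (inner ℝ z.1 z.2.1 : ℝ) :=
      continuous_fst.inner (continuous_snd.fst)
    have h2 : Continuous fun z : D × (D × D) => (inner ℝ z.1 z.2.2 : ℝ) :=
      continuous_fst.inner (continuous_snd.snd)
    exact ((Complex.continuous_exp.comp (continuous_const.mul
        (Complex.continuous_ofReal.comp h1))).mul
      (Complex.continuous_exp.comp (continuous_const.mul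
        (Complex.continuous_ofReal.comp h2))))
  have hexp_norm : ∀ (w : D) (ξ η : D),
      ‖Complex.exp (Complex.I * ((inner ℝ w ξ : ℝ) : ℂ)) *
        Complex.exp (-Complex.I * ((inner ℝ w η : ℝ) : ℂ))‖ ≤ 1 := by
    intro w ξ η
    rw [norm_mul]
    simp [Complex.norm_exp, Complex.mul_re]
  have hFint : Integrable F (volume.prod (ν.prod ν)) := by
    have hFeq : F = fun z : D × (D × D) =>
        (Complex.exp (Complex.I * ((inner ℝ z.1 z.2.1 : ℝ) : ℂ)) *
          Complex.exp (-Complex.I * ((inner ℝ z.1 z.2.2 : ℝ) : ℂ))) *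
        (a z.1 * (φ z.2.1 * conj (ψ z.2.2))) := by
      funext z; simp only [hF]; ring
    rw [hFeq]
    exact hbase.bdd_mul hucont.aestronglyMeasurable (Eventually.of_forall fun z => hexp_norm _ _ _)
  -- pointwise identity
  have hpt : ∀ x : D, a x * herg (m + 1) φ x * conj (herg (m + 1) ψ x)
      = c ^ 2 * ∫ p, F (x, p) ∂(ν.prod ν) := by
    intro x
    have hconj : conj (herg (m + 1) ψ x)
        = c * ∫ η, conj (ψ η) * Complex.exp (-Complex.I * ((inner ℝ x η : ℝ) : ℂ)) ∂ν := by
      rw [herg, map_mul, ← integral_conj]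
      congr 1
      · simp [hc, Complex.conj_ofReal]
      · apply integral_congr_ae
        filter_upwards with η
        rw [map_mul, ← Complex.exp_conj, map_mul, Complex.conj_I, Complex.conj_ofReal]
    rw [herg, hconj]
    have step : (∫ p, F (x, p) ∂(ν.prod ν))
        = a x * ((∫ ξ, φ ξ * Complex.exp (Complex.I * ((inner ℝ x ξ : ℝ) : ℂ)) ∂ν) *
            ∫ η, conj (ψ η) * Complex.exp (-Complex.I * ((inner ℝ x η : ℝ) : ℂ)) ∂ν) := by
      calc (∫ p, F (x, p) ∂(ν.prod ν))
          = ∫ p : D × D, a x *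
              ((φ p.1 * Complex.exp (Complex.I * ((inner ℝ x p.1 : ℝ) : ℂ))) *
                (conj (ψ p.2) * Complex.exp (-Complex.I * ((inner ℝ x p.2 : ℝ) : ℂ))))
              ∂(ν.prod ν) := by
            apply integral_congr_ae; filter_upwards with p; simp only [hF]; ring
        _ = _ := by
              rw [integral_const_mul,
                integral_prod_mul (f := fun ξ : D => φ ξ * Complex.exp (Complex.I * ((inner ℝ x ξ : ℝ) : ℂ)))
                  (g := fun η : D => conj (ψ η) * Complex.exp (-Complex.I * ((inner ℝ x η : ℝ) : ℂ)))]
    rw [step]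
    ring
  -- a.e. membership in the sphere
  have hScompl : ν (sphere (0 : D) 1)ᶜ = 0 := by
    rw [hν, surf, Measure.restrict_apply (isClosed_sphere.measurableSet.compl)]
    simp
  have hsph : ∀ᵐ p ∂ν.prod ν, p.1 ∈ sphere (0 : D) 1 ∧ p.2 ∈ sphere (0 : D) 1 := by
    rw [ae_iff]
    have hsub : {p : D × D | ¬(p.1 ∈ sphere (0 : D) 1 ∧ p.2 ∈ sphere (0 : D) 1)} ⊆
        ((sphere (0 : D) 1)ᶜ ×ˢ Set.univ) ∪ (Set.univ ×ˢ (sphere (0 : D) 1)ᶜ) := by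
      intro z hz
      simp only [Set.mem_setOf_eq, not_and_or] at hz
      rcases hz with h | h
      · exact Or.inl ⟨h, Set.mem_univ _⟩
      · exact Or.inr ⟨Set.mem_univ _, h⟩
    refine measure_mono_null hsub (measure_union_null ?_ ?_) <;>
      rw [Measure.prod_prod] <;> simp [hScompl]
  -- the inner x-integral vanishes
  have hzero : ∀ᵐ p ∂ν.prod ν, (∫ x, F (x, p)) = 0 := by
    filter_upwards [hsph] with p hp
    have hn1 : ‖p.1‖ = 1 := mem_sphere_zero_iff_norm.mp hp.1
    have hn2 : ‖p.2‖ = 1 := mem_sphere_zero_iff_norm.mp hp.2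
    have hle : ‖p.2 - p.1‖ ≤ 2 := by
      calc ‖p.2 - p.1‖ ≤ ‖p.2‖ + ‖p.1‖ := norm_sub_le _ _
        _ = 2 := by rw [hn1, hn2]; norm_num
    have hint0 : (∫ x, Complex.exp (-Complex.I * ((inner ℝ x (p.2 - p.1) : ℝ) : ℂ)) * a x) = 0 := by
      have h := hvanish (p.2 - p.1) hle
      rw [ftr] at h
      rcases mul_eq_zero.mp h with h' | h'
      · exfalso
        have : ((2 * Real.pi) ^ (-((m : ℝ) + 1) / 2) : ℝ) ≠ 0 := by
          positivity
        rw [Complex.ofReal_eq_zero] at h'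
        push_cast at h'
        exact this h'
      · exact h'
    calc (∫ x, F (x, p))
        = ∫ x, (φ p.1 * conj (ψ p.2)) *
            (Complex.exp (-Complex.I * ((inner ℝ x (p.2 - p.1) : ℝ) : ℂ)) * a x) := by
          apply integral_congr_ae
          filter_upwards with x
          have hinner : (inner ℝ x (p.2 - p.1) : ℝ) = (inner ℝ x p.2 : ℝ) - (inner ℝ x p.1 : ℝ) :=
            inner_sub_right _ _ _
          have harg : (-Complex.I) * ((inner ℝ x (p.2 - p.1) : ℝ) : ℂ)
              = Complex.I * ((inner ℝ x p.1 : ℝ) : ℂ) + (-Complex.I) * ((inner ℝ x p.2 : ℝ) : ℂ) := by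
            rw [hinner]; push_cast; ring
          rw [harg, Complex.exp_add]
          simp only [hF]; ring
      _ = (φ p.1 * conj (ψ p.2)) *
            ∫ x, Complex.exp (-Complex.I * ((inner ℝ x (p.2 - p.1) : ℝ) : ℂ)) * a x :=
          integral_const_mul _ _
      _ = 0 := by rw [hint0, mul_zero]
  -- put everything together
  calc ∫ x, a x * herg (m + 1) φ x * conj (herg (m + 1) ψ x)
      = ∫ x, c ^ 2 * ∫ p, F (x, p) ∂(ν.prod ν) := by
        apply integral_congr_ae; exact Eventually.of_forall hpt
    _ = c ^ 2 * ∫ x, ∫ p, F (x, p) ∂(ν.prod ν) := integral_const_mul _ _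
    _ = c ^ 2 * ∫ p, ∫ x, F (x, p) ∂volume ∂(ν.prod ν) := by
        rw [integral_integral_swap (f := fun x p => F (x, p)) hFint]
    _ = 0 := by
        rw [integral_congr_ae hzero]
        simp
end
end

section
/- Let d ≥ 2, let K : ℝ^d → ℂ be measurable, and suppose there is a constant C ≥ 0 such that for every ζ ∈ ℝ^d with |ζ| = 1, the restriction of K to the unit sphere centered at ζ is integrable with ∫_{S^{d-1}} |K(ζ + ω)| dS(ω) ≤ C. Then for every φ ∈ L²(S^{d-1}), the function (Tφ)(η) = (π/(2π)^{d/2}) ∫_{S^{d-1}} K(η − ξ) φ(ξ) dS(ξ) is defined for almost every η ∈ S^{d-1}, belongs to L²(S^{d-1}), and ‖Tφ‖_{L²(S^{d-1})} ≤ (π/(2π)^{d/2}) C ‖φ‖_{L²(S^{d-1})}. (Applied to K = â, this shows the Toeplitz operator with symbol a is bounded on the Herglotz space with norm at most (π/(2π)^{d/2}) C.) -/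
open MeasureTheory Filter Metric ComplexConjugate
open scoped ENNReal NNReal

noncomputable section

/-! ### Auxiliary lemmas -/

lemma stmt9_abs_coord_le_norm {n : ℕ} (x : EuclideanSpace ℝ (Fin n)) (i : Fin n) :
    |x i| ≤ ‖x‖ := by
  rw [EuclideanSpace.norm_eq, ← Real.sqrt_sq_eq_abs]
  apply Real.sqrt_le_sqrt
  have := Finset.single_le_sum (f := fun j => ‖x j‖ ^ 2)
    (fun j _ => by positivity) (Finset.mem_univ i)
  simpa [Real.norm_eq_abs, sq_abs] using this

lemma stmt9_lipschitz_normalize {E : Type*} [NormedAddCommGroup E] [NormedSpace ℝ E] :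
    LipschitzOnWith 2 (fun x : E => ‖x‖⁻¹ • x) {x : E | 1 ≤ ‖x‖} := by
  rw [lipschitzOnWith_iff_dist_le_mul]
  intro a ha b hb
  simp only [Set.mem_setOf_eq] at ha hb
  have ha0 : (0:ℝ) < ‖a‖ := lt_of_lt_of_le one_pos ha
  have hb0 : (0:ℝ) < ‖b‖ := lt_of_lt_of_le one_pos hb
  rw [dist_eq_norm, dist_eq_norm]
  have key : ‖a‖⁻¹ • a - ‖b‖⁻¹ • b = ‖a‖⁻¹ • (a - b) + (‖a‖⁻¹ - ‖b‖⁻¹) • b := by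
    rw [smul_sub, sub_smul]; abel
  rw [key]
  have hainv : ‖a‖⁻¹ ≤ 1 := by
    have hinv : ‖a‖⁻¹ * ‖a‖ = 1 := inv_mul_cancel₀ ha0.ne'
    nlinarith [inv_nonneg.mpr ha0.le]
  have h1 : ‖‖a‖⁻¹ • (a - b)‖ ≤ ‖a - b‖ := by
    rw [norm_smul, norm_inv, norm_norm]
    exact mul_le_of_le_one_left (norm_nonneg _) hainv
  have h2 : ‖(‖a‖⁻¹ - ‖b‖⁻¹) • b‖ ≤ ‖a - b‖ := by
    rw [norm_smul, Real.norm_eq_abs]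
    have hdiff : ‖a‖⁻¹ - ‖b‖⁻¹ = (‖b‖ - ‖a‖) / (‖a‖ * ‖b‖) := by
      field_simp
    rw [hdiff, abs_div, abs_of_pos (by positivity : (0:ℝ) < ‖a‖ * ‖b‖)]
    have heq : |‖b‖ - ‖a‖| / (‖a‖ * ‖b‖) * ‖b‖ = |‖b‖ - ‖a‖| / ‖a‖ := by
      field_simp
    rw [heq]
    have h3 : |‖b‖ - ‖a‖| / ‖a‖ ≤ |‖b‖ - ‖a‖| := div_le_self (abs_nonneg _) ha
    refine h3.trans ?_
    rw [abs_sub_comm]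
    exact (abs_norm_sub_norm_le a b)
  calc ‖‖a‖⁻¹ • (a - b) + (‖a‖⁻¹ - ‖b‖⁻¹) • b‖
      ≤ ‖‖a‖⁻¹ • (a - b)‖ + ‖(‖a‖⁻¹ - ‖b‖⁻¹) • b‖ := norm_add_le _ _
    _ ≤ ‖a - b‖ + ‖a - b‖ := add_le_add h1 h2
    _ = (2:ℝ≥0) * ‖a - b‖ := by push_cast; ring

/-- Insert a coordinate `ε` in front: an isometric embedding of ℝ^{n+1} into ℝ^{n+2}. -/
def stmt9cons (n : ℕ) (ε : ℝ) (u : EuclideanSpace ℝ (Fin (n+1))) :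
    EuclideanSpace ℝ (Fin (n+2)) :=
  (WithLp.equiv 2 (∀ _ : Fin (n+2), ℝ)).symm
    (Fin.cons ε ((WithLp.equiv 2 (∀ _ : Fin (n+1), ℝ)) u))

lemma stmt9cons_apply_zero (n : ℕ) (ε : ℝ) (u : EuclideanSpace ℝ (Fin (n+1))) :
    stmt9cons n ε u 0 = ε := rfl

lemma stmt9cons_apply_succ (n : ℕ) (ε : ℝ) (u : EuclideanSpace ℝ (Fin (n+1)))
    (j : Fin (n+1)) : stmt9cons n ε u j.succ = u j := rfl

lemma stmt9cons_isometry (n : ℕ) (ε : ℝ) : Isometry (stmt9cons n ε) := by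
  apply Isometry.of_dist_eq
  intro u v
  rw [EuclideanSpace.dist_eq, EuclideanSpace.dist_eq]
  congr 1
  rw [Fin.sum_univ_succ]
  simp only [stmt9cons_apply_zero, stmt9cons_apply_succ, dist_self]
  norm_num

/-- The coordinate swap isometry of ℝ^{n+2}. -/
def stmt9P (n : ℕ) (i : Fin (n+2)) :
    EuclideanSpace ℝ (Fin (n+2)) ≃ₗᵢ[ℝ] EuclideanSpace ℝ (Fin (n+2)) :=
  LinearIsometryEquiv.piLpCongrLeft 2 ℝ ℝ (Equiv.swap 0 i)

lemma stmt9P_apply (n : ℕ) (i : Fin (n+2)) (x : EuclideanSpace ℝ (Fin (n+2)))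
    (j : Fin (n+2)) : stmt9P n i x j = x (Equiv.swap 0 i j) := by
  rw [stmt9P, LinearIsometryEquiv.piLpCongrLeft_apply]
  rw [Equiv.piCongrLeft'_apply, Equiv.symm_swap]

/-- Removing the first coordinate. -/
def stmt9tail (n : ℕ) (w : EuclideanSpace ℝ (Fin (n+2))) :
    EuclideanSpace ℝ (Fin (n+1)) :=
  (WithLp.equiv 2 (∀ _ : Fin (n+1), ℝ)).symm
    (fun j => w j.succ)

lemma stmt9tail_apply (n : ℕ) (w : EuclideanSpace ℝ (Fin (n+2))) (j : Fin (n+1)) :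
    stmt9tail n w j = w j.succ := rfl

lemma stmt9tail_norm_le (n : ℕ) (w : EuclideanSpace ℝ (Fin (n+2))) :
    ‖stmt9tail n w‖ ≤ ‖w‖ := by
  rw [EuclideanSpace.norm_eq, EuclideanSpace.norm_eq]
  apply Real.sqrt_le_sqrt
  rw [Fin.sum_univ_succ (f := fun j : Fin (n+2) => ‖w j‖ ^ 2)]
  have h : ∑ j : Fin (n+1), ‖stmt9tail n w j‖ ^ 2 = ∑ j : Fin (n+1), ‖w j.succ‖ ^ 2 := rfl
  rw [h]
  exact le_add_of_nonneg_left (by positivity)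

/-- The sign-cap embedding. -/
def stmt9G (n : ℕ) (i : Fin (n+2)) (ε : ℝ) (u : EuclideanSpace ℝ (Fin (n+1))) :
    EuclideanSpace ℝ (Fin (n+2)) :=
  stmt9P n i (stmt9cons n ε u)

lemma stmt9G_isometry (n : ℕ) (i : Fin (n+2)) (ε : ℝ) : Isometry (stmt9G n i ε) :=
  (stmt9P n i).isometry.comp (stmt9cons_isometry n ε)

lemma stmt9_surj (n : ℕ) (i : Fin (n+2)) (x : EuclideanSpace ℝ (Fin (n+2)))
    (ε : ℝ) (hxi : x i = ε) :
    stmt9G n i ε (stmt9tail n (stmt9P n i x)) = x := by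
  have hcons : stmt9cons n ε (stmt9tail n (stmt9P n i x)) = stmt9P n i x := by
    apply PiLp.ext
    intro j
    refine Fin.cases ?_ (fun j' => ?_) j
    · rw [stmt9cons_apply_zero, stmt9P_apply, Equiv.swap_apply_left, hxi]
    · rw [stmt9cons_apply_succ, stmt9tail_apply]
  rw [stmt9G, hcons]
  apply PiLp.ext
  intro j
  rw [stmt9P_apply, stmt9P_apply, Equiv.swap_apply_self]

lemma stmt9_finite (d : ℕ) (hd : 2 ≤ d) :
    μH[(d : ℝ) - 1] (sphere (0 : Ed d) 1) < ⊤ := by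
  classical
  obtain ⟨n, rfl⟩ : ∃ n, d = n + 2 := ⟨d - 2, by omega⟩
  have hmd : ((n + 2 : ℕ) : ℝ) - 1 = ((n + 1 : ℕ) : ℝ) := by push_cast; ring
  rw [hmd]
  set m : ℝ := ((n + 1 : ℕ) : ℝ) with hm_def
  have hm0 : (0:ℝ) ≤ m := by rw [hm_def]; positivity
  set R : ℝ := (n : ℝ) + 3 with hR_def
  have hball : μH[m] (closedBall (0 : Ed (n+1)) R) < ⊤ := by
    have hfr : ((Module.finrank ℝ (Ed (n+1)) : ℕ) : ℝ) = m := by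
      rw [finrank_euclideanSpace_fin]
    rw [← hfr]
    exact (isCompact_closedBall _ _).measure_lt_top
  have sgnb : Bool → ℝ := fun b => if b then 1 else -1
  -- coverage
  have cover : sphere (0 : Ed (n+2)) 1 ⊆
      ⋃ q : Fin (n+2) × Bool,
        (fun x : Ed (n+2) => ‖x‖⁻¹ • x) ''
          (stmt9G n q.1 (if q.2 then 1 else -1) '' closedBall (0 : Ed (n+1)) R ∩
            {x : Ed (n+2) | 1 ≤ ‖x‖}) := by
    intro v hv
    have hv1 : ‖v‖ = 1 := by simpa using hv
    obtain ⟨i, -, hi⟩ := Finset.exists_max_image Finset.univ (fun j => |v j|)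
      ⟨0, Finset.mem_univ 0⟩
    have hcpos : 0 < |v i| := by
      by_contra h
      push_neg at h
      have hall : ∀ j, v j = 0 := by
        intro j
        have h2 : |v j| ≤ 0 := le_trans (hi j (Finset.mem_univ j)) h
        simpa [abs_nonpos_iff] using h2
      have hz : ‖v‖ = 0 := by
        rw [EuclideanSpace.norm_eq]
        simp [hall]
      rw [hz] at hv1
      norm_num at hv1
    have hvi : v i ≠ 0 := fun h => by simp [h] at hcpos
    have hsum : (1:ℝ) ≤ ((n:ℝ)+2) * |v i| ^ 2 := by
      have h1 : ‖v‖ ^ 2 = ∑ j, ‖v j‖ ^ 2 := by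
        rw [EuclideanSpace.norm_eq, Real.sq_sqrt (by positivity)]
      have h2 : ∑ j, ‖v j‖ ^ 2 ≤ ∑ _j : Fin (n+2), |v i| ^ 2 := by
        apply Finset.sum_le_sum
        intro j _
        have h3 : |v j| ≤ |v i| := hi j (Finset.mem_univ j)
        rw [Real.norm_eq_abs]
        nlinarith [abs_nonneg (v j)]
      have h4 : ∑ _j : Fin (n+2), |v i| ^ 2 = ((n:ℝ)+2) * |v i| ^ 2 := by
        rw [Finset.sum_const, Finset.card_univ, Fintype.card_fin, nsmul_eq_mul]
        push_cast; ring
      nlinarith [hv1]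
    have hcle1 : |v i| ≤ 1 := by
      have := stmt9_abs_coord_le_norm v i
      rwa [hv1] at this
    have hcinv_le : |v i|⁻¹ ≤ R := by
      have h5 : (1:ℝ) ≤ ((n:ℝ)+2) * |v i| := by nlinarith
      rw [hR_def, inv_eq_one_div, div_le_iff₀ hcpos]
      nlinarith
    set x : Ed (n+2) := |v i|⁻¹ • v with hx_def
    have hxn : ‖x‖ = |v i|⁻¹ := by
      rw [hx_def, norm_smul, hv1, Real.norm_eq_abs, abs_of_pos (inv_pos.mpr hcpos), mul_one]
    have hx1 : 1 ≤ ‖x‖ := by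
      rw [hxn]
      have h6 : |v i| * |v i|⁻¹ = 1 := mul_inv_cancel₀ hcpos.ne'
      nlinarith [inv_nonneg.mpr hcpos.le]
    have hpx : ‖x‖⁻¹ • x = v := by
      rw [hxn, inv_inv, hx_def, smul_smul, mul_inv_cancel₀ hcpos.ne', one_smul]
    set b : Bool := decide (0 ≤ v i) with hb_def
    have hxi : x i = if b then (1:ℝ) else -1 := by
      have happ : x i = |v i|⁻¹ * v i := by
        rw [hx_def]
        simp [PiLp.smul_apply, smul_eq_mul]
      by_cases h0 : 0 ≤ v i
      · have habs : |v i| = v i := abs_of_nonneg h0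
        rw [happ, habs, inv_mul_cancel₀ hvi, hb_def]
        simp [h0]
      · have habs : |v i| = -v i := abs_of_neg (lt_of_not_ge h0)
        have hval : (-v i)⁻¹ * v i = -1 := by
          field_simp
        rw [happ, habs, hval, hb_def]
        simp [h0]
    refine Set.mem_iUnion.mpr ⟨(i, b), ?_⟩
    refine ⟨x, ⟨?_, hx1⟩, hpx⟩
    refine ⟨stmt9tail n (stmt9P n i x), ?_, stmt9_surj n i x _ hxi⟩
    rw [mem_closedBall_zero_iff]
    calc ‖stmt9tail n (stmt9P n i x)‖ ≤ ‖stmt9P n i x‖ := stmt9tail_norm_le n _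
      _ = ‖x‖ := (stmt9P n i).norm_map x
      _ = |v i|⁻¹ := hxn
      _ ≤ R := hcinv_le
  -- measure estimate
  refine lt_of_le_of_lt ((measure_mono cover).trans (measure_iUnion_le _)) ?_
  rw [tsum_fintype]
  refine ENNReal.sum_lt_top.mpr fun q _ => ?_
  have hlip : LipschitzOnWith 2 (fun x : Ed (n+2) => ‖x‖⁻¹ • x)
      (stmt9G n q.1 (if q.2 then 1 else -1) '' closedBall (0 : Ed (n+1)) R ∩
        {x : Ed (n+2) | 1 ≤ ‖x‖}) :=
    stmt9_lipschitz_normalize.mono Set.inter_subset_right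
  refine lt_of_le_of_lt (hlip.hausdorffMeasure_image_le hm0) ?_
  refine ENNReal.mul_lt_top (ENNReal.rpow_lt_top_of_nonneg hm0 ENNReal.coe_ne_top) ?_
  refine lt_of_le_of_lt (measure_mono Set.inter_subset_left) ?_
  rw [(stmt9G_isometry n q.1 _).hausdorffMeasure_image (Or.inl hm0)]
  exact hball

lemma stmt9_finiteMeasure (d : ℕ) (hd : 2 ≤ d) : IsFiniteMeasure (surf d) := by
  constructor
  rw [surf, Measure.restrict_apply MeasurableSet.univ, Set.univ_inter]
  exact stmt9_finite d hd

lemma stmt9_map_neg (d : ℕ) :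
    Measure.map (fun x : Ed d => -x) (surf d) = surf d := by
  ext s hs
  rw [Measure.map_apply measurable_neg hs, surf,
    Measure.restrict_apply (measurable_neg hs), Measure.restrict_apply hs]
  have himg : (fun x : Ed d => -x) ⁻¹' s ∩ sphere (0 : Ed d) 1
      = (fun x : Ed d => -x) '' (s ∩ sphere (0 : Ed d) 1) := by
    ext x
    simp only [Set.mem_inter_iff, Set.mem_preimage, Set.mem_image, mem_sphere_iff_norm, sub_zero]
    constructor
    · rintro ⟨hx, hn⟩
      exact ⟨-x, ⟨hx, by simpa using hn⟩, by simp⟩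
    · rintro ⟨y, ⟨hy, hn⟩, rfl⟩
      simp only [Set.mem_preimage, neg_neg]
      exact ⟨hy, by simpa using hn⟩
  rw [himg]
  have hiso : Isometry (fun x : Ed d => -x) := isometry_neg
  rw [hiso.hausdorffMeasure_image (Or.inr neg_surjective)]

lemma stmt9_lintegral_neg (d : ℕ) (g : Ed d → ℝ≥0∞) :
    ∫⁻ x, g (-x) ∂(surf d) = ∫⁻ x, g x ∂(surf d) := by
  conv_rhs => rw [← stmt9_map_neg d]
  exact (lintegral_map_equiv g (Homeomorph.toMeasurableEquiv (Homeomorph.neg (Ed d)))).symm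

theorem statement9 (d : ℕ) (hd : 2 ≤ d) (K : Ed d → ℂ) (hK : Measurable K)
    (C : ℝ) (hC : 0 ≤ C)
    (hker : ∀ ζ : Ed d, ‖ζ‖ = 1 →
      Integrable (fun ω : Ed d => K (ζ + ω)) (surf d) ∧
      ∫ ω, ‖K (ζ + ω)‖ ∂(surf d) ≤ C)
    (φ : Ed d → ℂ) (hφ : MemLp φ 2 (surf d)) :
    MemLp (fun η => ((Real.pi / (2 * Real.pi) ^ ((d : ℝ) / 2) : ℝ) : ℂ) *
        ∫ ξ, K (η - ξ) * φ ξ ∂(surf d)) 2 (surf d) ∧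
    eLpNorm (fun η => ((Real.pi / (2 * Real.pi) ^ ((d : ℝ) / 2) : ℝ) : ℂ) *
        ∫ ξ, K (η - ξ) * φ ξ ∂(surf d)) 2 (surf d) ≤
      ENNReal.ofReal (Real.pi / (2 * Real.pi) ^ ((d : ℝ) / 2) * C) *
        eLpNorm φ 2 (surf d) := by
  classical
  haveI : IsFiniteMeasure (surf d) := stmt9_finiteMeasure d hd
  set μ := surf d with hμ
  set c : ℝ := Real.pi / (2 * Real.pi) ^ ((d : ℝ) / 2) with hc_def
  have hc0 : 0 ≤ c := by
    apply div_nonneg Real.pi_pos.le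
    positivity
  obtain ⟨hφm, hφ2⟩ := hφ
  set ψ := hφm.mk φ with hψdef
  have hψm : StronglyMeasurable ψ := hφm.stronglyMeasurable_mk
  have hφψ : φ =ᵐ[μ] ψ := hφm.ae_eq_mk
  set g : Ed d → ℂ := fun η => ∫ ξ, K (η - ξ) * ψ ξ ∂μ with hg
  have hgeq : (fun η => ((c : ℝ) : ℂ) * ∫ ξ, K (η - ξ) * φ ξ ∂μ)
      = fun η => ((c : ℝ) : ℂ) * g η := by
    funext η
    congr 1
    apply integral_congr_ae
    exact hφψ.mono fun ξ h => by dsimp only; rw [h]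
  -- measurability of g
  have hFm : StronglyMeasurable (fun p : Ed d × Ed d => K (p.1 - p.2) * ψ p.2) := by
    exact ((hK.comp measurable_sub).mul (hψm.measurable.comp measurable_snd)).stronglyMeasurable
  have hgm : StronglyMeasurable g := hFm.integral_prod_right'
  -- lintegral bounds
  have hsph : MeasurableSet (sphere (0 : Ed d) 1) := isClosed_sphere.measurableSet
  have hae : ∀ᵐ η ∂μ, η ∈ sphere (0 : Ed d) 1 := ae_restrict_mem hsph
  have hrow : ∀ η ∈ sphere (0 : Ed d) 1,
      ∫⁻ ξ, (‖K (η - ξ)‖₊ : ℝ≥0∞) ∂μ ≤ ENNReal.ofReal C := by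
    intro η hη
    have hη1 : ‖η‖ = 1 := by simpa using hη
    obtain ⟨hint, hbound⟩ := hker η hη1
    have heq : ∫⁻ ξ, (‖K (η - ξ)‖₊ : ℝ≥0∞) ∂μ
        = ∫⁻ ω, (‖K (η + ω)‖₊ : ℝ≥0∞) ∂μ := by
      rw [← stmt9_lintegral_neg d (fun ω => (‖K (η + ω)‖₊ : ℝ≥0∞))]
      exact lintegral_congr fun ξ => by rw [← sub_eq_add_neg]
    rw [heq]
    exact (ofReal_integral_norm_eq_lintegral_enorm hint).symm.trans_le (ENNReal.ofReal_le_ofReal hbound)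
  have hcol : ∀ ξ ∈ sphere (0 : Ed d) 1,
      ∫⁻ η, (‖K (η - ξ)‖₊ : ℝ≥0∞) ∂μ ≤ ENNReal.ofReal C := by
    intro ξ hξ
    have hξ1 : ‖(-ξ)‖ = 1 := by rw [norm_neg]; simpa using hξ
    obtain ⟨hint, hbound⟩ := hker (-ξ) hξ1
    have heq : ∫⁻ η, (‖K (η - ξ)‖₊ : ℝ≥0∞) ∂μ
        = ∫⁻ η, (‖K (-ξ + η)‖₊ : ℝ≥0∞) ∂μ :=
      lintegral_congr fun η => by rw [neg_add_eq_sub]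
    rw [heq]
    exact (ofReal_integral_norm_eq_lintegral_enorm hint).symm.trans_le (ENNReal.ofReal_le_ofReal hbound)
  -- rpow facts
  have half2 : ∀ x : ℝ≥0∞, (x ^ (1/2 : ℝ)) ^ (2 : ℝ) = x := by
    intro x
    rw [← ENNReal.rpow_mul]
    norm_num
  have halfmul : ∀ x : ℝ≥0∞, x ^ (1/2 : ℝ) * x ^ (1/2 : ℝ) = x := by
    intro x
    rw [← ENNReal.rpow_add_of_nonneg _ _ (by norm_num) (by norm_num)]
    norm_num
  have hconj : Real.HolderConjugate 2 2 := Real.HolderConjugate.two_two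
  -- pointwise Cauchy-Schwarz bound
  have hpoint : ∀ η ∈ sphere (0 : Ed d) 1,
      (‖g η‖₊ : ℝ≥0∞) ^ (2:ℝ) ≤
        ENNReal.ofReal C * ∫⁻ ξ, (‖K (η - ξ)‖₊ : ℝ≥0∞) * (‖ψ ξ‖₊ : ℝ≥0∞) ^ (2:ℝ) ∂μ := by
    intro η hη
    have hNKm : Measurable fun ξ : Ed d => (‖K (η - ξ)‖₊ : ℝ≥0∞) :=
      (hK.comp (measurable_const.sub measurable_id)).enorm
    have hNBm : Measurable fun ξ : Ed d => (‖ψ ξ‖₊ : ℝ≥0∞) := hψm.measurable.enorm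
    have h1 : (‖g η‖₊ : ℝ≥0∞) ≤ ∫⁻ ξ, (‖K (η - ξ)‖₊ : ℝ≥0∞) * (‖ψ ξ‖₊ : ℝ≥0∞) ∂μ := by
      refine (enorm_integral_le_lintegral_enorm _).trans_eq ?_
      exact lintegral_congr fun ξ => by rw [enorm_mul]; rfl
    have h2 : ∫⁻ ξ, (‖K (η - ξ)‖₊ : ℝ≥0∞) * (‖ψ ξ‖₊ : ℝ≥0∞) ∂μ ≤
        (∫⁻ ξ, (‖K (η - ξ)‖₊ : ℝ≥0∞) ∂μ) ^ (1/2 : ℝ) *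
        (∫⁻ ξ, (‖K (η - ξ)‖₊ : ℝ≥0∞) * (‖ψ ξ‖₊ : ℝ≥0∞) ^ (2:ℝ) ∂μ) ^ (1/2 : ℝ) := by
      have hH := ENNReal.lintegral_mul_le_Lp_mul_Lq μ hconj
        (f := fun ξ => (‖K (η - ξ)‖₊ : ℝ≥0∞) ^ (1/2 : ℝ))
        (g := fun ξ => (‖K (η - ξ)‖₊ : ℝ≥0∞) ^ (1/2 : ℝ) * (‖ψ ξ‖₊ : ℝ≥0∞))
        (hNKm.pow_const _).aemeasurable ((hNKm.pow_const _).mul hNBm).aemeasurable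
      calc ∫⁻ ξ, (‖K (η - ξ)‖₊ : ℝ≥0∞) * (‖ψ ξ‖₊ : ℝ≥0∞) ∂μ
          = ∫⁻ ξ, ((fun ξ => (‖K (η - ξ)‖₊ : ℝ≥0∞) ^ (1/2 : ℝ)) *
              fun ξ => (‖K (η - ξ)‖₊ : ℝ≥0∞) ^ (1/2 : ℝ) * (‖ψ ξ‖₊ : ℝ≥0∞)) ξ ∂μ := by
            refine lintegral_congr fun ξ => ?_
            simp only [Pi.mul_apply]
            rw [← mul_assoc, halfmul]
        _ ≤ _ := hH
        _ = (∫⁻ ξ, (‖K (η - ξ)‖₊ : ℝ≥0∞) ∂μ) ^ (1/2 : ℝ) *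
            (∫⁻ ξ, (‖K (η - ξ)‖₊ : ℝ≥0∞) * (‖ψ ξ‖₊ : ℝ≥0∞) ^ (2:ℝ) ∂μ) ^ (1/2 : ℝ) := by
            congr 1
            · congr 1
              exact lintegral_congr fun ξ => half2 _
            · congr 1
              refine lintegral_congr fun ξ => ?_
              rw [ENNReal.mul_rpow_of_nonneg _ _ (by norm_num : (0:ℝ) ≤ 2), half2]
    calc (‖g η‖₊ : ℝ≥0∞) ^ (2:ℝ)
        ≤ ((∫⁻ ξ, (‖K (η - ξ)‖₊ : ℝ≥0∞) ∂μ) ^ (1/2 : ℝ) *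
            (∫⁻ ξ, (‖K (η - ξ)‖₊ : ℝ≥0∞) * (‖ψ ξ‖₊ : ℝ≥0∞) ^ (2:ℝ) ∂μ) ^ (1/2 : ℝ)) ^ (2:ℝ) :=
          ENNReal.rpow_le_rpow (h1.trans h2) (by norm_num)
      _ = (∫⁻ ξ, (‖K (η - ξ)‖₊ : ℝ≥0∞) ∂μ) *
            ∫⁻ ξ, (‖K (η - ξ)‖₊ : ℝ≥0∞) * (‖ψ ξ‖₊ : ℝ≥0∞) ^ (2:ℝ) ∂μ := by
          rw [ENNReal.mul_rpow_of_nonneg _ _ (by norm_num : (0:ℝ) ≤ 2), half2, half2]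
      _ ≤ ENNReal.ofReal C * ∫⁻ ξ, (‖K (η - ξ)‖₊ : ℝ≥0∞) * (‖ψ ξ‖₊ : ℝ≥0∞) ^ (2:ℝ) ∂μ :=
          mul_le_mul_left (hrow η hη) _
  -- main estimate
  have huncurry : AEMeasurable (Function.uncurry fun η ξ : Ed d =>
      (‖K (η - ξ)‖₊ : ℝ≥0∞) * (‖ψ ξ‖₊ : ℝ≥0∞) ^ (2:ℝ)) (μ.prod μ) := by
    apply Measurable.aemeasurable
    exact (hK.comp measurable_sub).enorm.mul
      ((hψm.measurable.comp measurable_snd).enorm.pow_const _)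
  have key : ∫⁻ η, (‖g η‖₊ : ℝ≥0∞) ^ (2:ℝ) ∂μ ≤
      (ENNReal.ofReal C * ENNReal.ofReal C) * ∫⁻ ξ, (‖ψ ξ‖₊ : ℝ≥0∞) ^ (2:ℝ) ∂μ := by
    calc ∫⁻ η, (‖g η‖₊ : ℝ≥0∞) ^ (2:ℝ) ∂μ
        ≤ ∫⁻ η, ENNReal.ofReal C *
            ∫⁻ ξ, (‖K (η - ξ)‖₊ : ℝ≥0∞) * (‖ψ ξ‖₊ : ℝ≥0∞) ^ (2:ℝ) ∂μ ∂μ :=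
          lintegral_mono_ae (hae.mono fun η hη => hpoint η hη)
      _ = ENNReal.ofReal C * ∫⁻ η,
            ∫⁻ ξ, (‖K (η - ξ)‖₊ : ℝ≥0∞) * (‖ψ ξ‖₊ : ℝ≥0∞) ^ (2:ℝ) ∂μ ∂μ :=
          lintegral_const_mul' _ _ ENNReal.ofReal_ne_top
      _ = ENNReal.ofReal C * ∫⁻ ξ,
            ∫⁻ η, (‖K (η - ξ)‖₊ : ℝ≥0∞) * (‖ψ ξ‖₊ : ℝ≥0∞) ^ (2:ℝ) ∂μ ∂μ := by
          rw [lintegral_lintegral_swap huncurry]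
      _ = ENNReal.ofReal C * ∫⁻ ξ,
            (∫⁻ η, (‖K (η - ξ)‖₊ : ℝ≥0∞) ∂μ) * (‖ψ ξ‖₊ : ℝ≥0∞) ^ (2:ℝ) ∂μ := by
          congr 1
          exact lintegral_congr fun ξ => lintegral_mul_const' _ _
            (ENNReal.rpow_ne_top_of_nonneg (by norm_num) ENNReal.coe_ne_top)
      _ ≤ ENNReal.ofReal C * ∫⁻ ξ,
            ENNReal.ofReal C * (‖ψ ξ‖₊ : ℝ≥0∞) ^ (2:ℝ) ∂μ := by
          refine mul_le_mul_right (lintegral_mono_ae (hae.mono fun ξ hξ => ?_)) _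
          exact mul_le_mul_left (hcol ξ hξ) _
      _ = (ENNReal.ofReal C * ENNReal.ofReal C) * ∫⁻ ξ, (‖ψ ξ‖₊ : ℝ≥0∞) ^ (2:ℝ) ∂μ := by
          rw [lintegral_const_mul' _ _ ENNReal.ofReal_ne_top, mul_assoc]
  have sqrtmul : ∀ x : ℝ≥0∞, (x * x) ^ (1/2 : ℝ) = x := fun x => by
    rw [ENNReal.mul_rpow_of_nonneg _ _ (by norm_num : (0:ℝ) ≤ 1/2), halfmul]
  have hsnorm_g : eLpNorm g 2 μ ≤ ENNReal.ofReal C * eLpNorm ψ 2 μ := by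
    rw [eLpNorm_eq_lintegral_rpow_enorm_toReal two_ne_zero ENNReal.ofNat_ne_top,
      eLpNorm_eq_lintegral_rpow_enorm_toReal two_ne_zero ENNReal.ofNat_ne_top]
    simp only [ENNReal.toReal_ofNat]
    calc (∫⁻ η, (‖g η‖₊ : ℝ≥0∞) ^ (2:ℝ) ∂μ) ^ (1/2 : ℝ)
        ≤ ((ENNReal.ofReal C * ENNReal.ofReal C) *
            ∫⁻ ξ, (‖ψ ξ‖₊ : ℝ≥0∞) ^ (2:ℝ) ∂μ) ^ (1/2 : ℝ) :=
          ENNReal.rpow_le_rpow key (by norm_num)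
      _ = ENNReal.ofReal C * (∫⁻ ξ, (‖ψ ξ‖₊ : ℝ≥0∞) ^ (2:ℝ) ∂μ) ^ (1/2 : ℝ) := by
          rw [ENNReal.mul_rpow_of_nonneg _ _ (by norm_num : (0:ℝ) ≤ 1/2), sqrtmul]
  have hψφ : eLpNorm φ 2 μ = eLpNorm ψ 2 μ := eLpNorm_congr_ae hφψ
  have hsmul : (fun η => ((c : ℝ) : ℂ) * g η) = ((c : ℝ) : ℂ) • g := rfl
  have hnncoe : ((‖((c : ℝ) : ℂ)‖₊ : ℝ≥0) : ℝ≥0∞) = ENNReal.ofReal c := by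
    rw [← enorm_eq_nnnorm, ← ofReal_norm_eq_enorm, Complex.norm_real, Real.norm_eq_abs, abs_of_nonneg hc0]
  have hconstnorm : eLpNorm (fun η => ((c : ℝ) : ℂ) * g η) 2 μ
      = ENNReal.ofReal c * eLpNorm g 2 μ := by
    rw [hsmul, eLpNorm_const_smul, enorm_eq_nnnorm, hnncoe]
  have hb : eLpNorm (fun η => ((c : ℝ) : ℂ) * ∫ ξ, K (η - ξ) * φ ξ ∂μ) 2 μ ≤
      ENNReal.ofReal (c * C) * eLpNorm φ 2 μ := by
    rw [hgeq, hconstnorm, ENNReal.ofReal_mul hc0, hψφ, mul_assoc]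
    exact mul_le_mul_right hsnorm_g _
  refine ⟨⟨?_, lt_of_le_of_lt hb ?_⟩, hb⟩
  · rw [hgeq, hsmul]
    exact (hgm.const_smul _).aestronglyMeasurable
  · exact ENNReal.mul_lt_top ENNReal.ofReal_lt_top hφ2
end
end
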